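/- Let P be a full-dimensional compact (α, p)-uniformly convex subset of ℝⁿ, u a nonzero vector, and v = argmin_{y∈P}⟨u, y⟩. Then for all x ∈ P with x ≠ v, ⟨u, x − v⟩ / ‖x − v‖^p ≥ α‖u‖. -/

import Mathlib

open Set
open scoped RealInnerProductSpace

/-- scaling inequality over (α, p)-uniformly convex sets:
for the linear minimizer `v` of a nonzero vector `u` over `P`,
`⟨u, x - v⟩/‖x - v‖^p ≥ α‖u‖` for all `x ∈ P`, `x ≠ v`. -/
theorem scaling_uniformly_convex_set {n : ℕ}
    (P : Set (EuclideanSpace ℝ (Fin n)))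
    (hP : IsCompact P) (hPne : P.Nonempty)
    (hfull : (interior P).Nonempty)
    (α p : ℝ) (hα : 0 < α) (hp : 0 < p)
    (hunif : ∀ x ∈ P, ∀ y ∈ P, ∀ γ ∈ Icc (0:ℝ) 1,
      ∀ z : EuclideanSpace ℝ (Fin n), ‖z‖ ≤ 1 →
        y + γ • (x - y) + (γ * (1 - γ) * α * ‖x - y‖ ^ p) • z ∈ P)
    (u : EuclideanSpace ℝ (Fin n)) (hu : u ≠ 0)
    (v : EuclideanSpace ℝ (Fin n)) (hvP : v ∈ P)
    (hv : ∀ y ∈ P, ⟪u, v⟫ ≤ ⟪u, y⟫) :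
    ∀ x ∈ P, x ≠ v → α * ‖u‖ ≤ ⟪u, x - v⟫ / ‖x - v‖ ^ p := by
  intro x hxP hxv
  have hu' : (0:ℝ) < ‖u‖ := norm_pos_iff.mpr hu
  have hxv' : (0:ℝ) < ‖x - v‖ := by
    rw [norm_pos_iff]; exact sub_ne_zero.mpr hxv
  have hNp : (0:ℝ) < ‖x - v‖ ^ p := Real.rpow_pos_of_pos hxv' p
  set z : EuclideanSpace ℝ (Fin n) := -(‖u‖⁻¹ • u) with hz
  have hznorm : ‖z‖ ≤ 1 := by
    rw [hz, norm_neg, norm_smul, norm_inv, norm_norm,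
      inv_mul_cancel₀ (ne_of_gt hu')]
  have huz : ⟪u, z⟫ = -‖u‖ := by
    rw [hz, inner_neg_right, real_inner_smul_right, real_inner_self_eq_norm_sq]
    field_simp
  -- key inequality for each γ ∈ (0,1]
  have key : ∀ γ : ℝ, 0 < γ → γ ≤ 1 →
      (1 - γ) * (α * ‖u‖ * ‖x - v‖ ^ p) ≤ ⟪u, x - v⟫ := by
    intro γ hγ0 hγ1
    have hq := hunif x hxP v hvP γ ⟨le_of_lt hγ0, hγ1⟩ z hznorm
    have h2 := hv _ hq
    have hexp : ⟪u, v + γ • (x - v) + (γ * (1 - γ) * α * ‖x - v‖ ^ p) • z⟫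
        = ⟪u, v⟫ + γ * ⟪u, x - v⟫ + (γ * (1 - γ) * α * ‖x - v‖ ^ p) * (-‖u‖) := by
      rw [inner_add_right, inner_add_right, real_inner_smul_right,
        real_inner_smul_right, huz]
    rw [hexp] at h2
    have h3 : 0 ≤ γ * ⟪u, x - v⟫ + (γ * (1 - γ) * α * ‖x - v‖ ^ p) * (-‖u‖) := by
      linarith
    have h4 : γ * ((1 - γ) * (α * ‖u‖ * ‖x - v‖ ^ p)) ≤ γ * ⟪u, x - v⟫ := by
      nlinarith
    exact le_of_mul_le_mul_left h4 hγ0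
  -- let γ → 0
  have main : α * ‖u‖ * ‖x - v‖ ^ p ≤ ⟪u, x - v⟫ := by
    set c := α * ‖u‖ * ‖x - v‖ ^ p with hc
    have hcpos : 0 < c := by positivity
    refine le_of_forall_pos_le_add ?_
    intro ε hε
    set γ := min (ε / c) 1 with hγ
    have hγ0 : 0 < γ := lt_min (div_pos hε hcpos) one_pos
    have hγ1 : γ ≤ 1 := min_le_right _ _
    have h := key γ hγ0 hγ1
    have hγc : γ * c ≤ ε := by
      calc γ * c ≤ (ε / c) * c := by
            apply mul_le_mul_of_nonneg_right (min_le_left _ _) (le_of_lt hcpos)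
        _ = ε := div_mul_cancel₀ ε (ne_of_gt hcpos)
    nlinarith
  rw [le_div_iff₀ hNp]
  linarith
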